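/- Fix p ∈ 𝒯 and i ∈ 𝒰_p. Suppose there exist nonnegative reals α_{jp} (j ∈ 𝒰_p∖{i}), β_{jp} (j ∈ 𝒰∖𝒰_p), and λ_{jp} (j ∈ 𝒰_p∖{i}) such that the KKT stationarity equation (I_{N_T} + Σ_{j∈𝒰_p∖{i}} α_{jp} h_{jp} h_{jp}ᴴ + Σ_{j∈𝒰∖𝒰_p} β_{jp} h_{jp} h_{jp}ᴴ + Σ_{j∈𝒰_p∖{i}} (λ_{jp}/N_T) h_{jp} h_{jp}ᴴ) w_{ip} = 0 holds. Then w_{ip} = 0 (the coefficient matrix is Hermitian positive definite), and consequently, since γ_{ip} > 0 and σ² > 0, the SINR constraint |h_{ip}ᴴ w_{ip}|² ≥ γ_{ip}(Σ_{j∈𝒰_p∖{i}} |h_{ip}ᴴ w_{jp}|² + Σ_{q∈𝒯_i∖{p}} τ_{iq} + Σ_{q∈𝒯∖𝒯_i} ε_{iq} + σ²) is violated for any nonnegative τ, ε. Hence at any feasible KKT point of the relaxed problem the multiplier λ_{ip} of each SINR constraint must be strictly positive. -/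

import Mathlib

open Matrix
open scoped ComplexOrder


lemma psd_smul_vecMulVec {N : ℕ} (v : Fin N → ℂ) (r : ℝ) (hr : 0 ≤ r) :
    (((r : ℝ) : ℂ) • vecMulVec v (star v)).PosSemidef := by
  have hpsd : (vecMulVec v (star v)).PosSemidef := by
    rw [vecMulVec_eq (Fin 1), ← conjTranspose_replicateCol]
    exact posSemidef_self_mul_conjTranspose _
  refine Matrix.PosSemidef.of_dotProduct_mulVec_nonneg ?_ ?_
  · unfold Matrix.IsHermitian
    rw [conjTranspose_smul, hpsd.1]
    congr 1
    simp
  · intro x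
    rw [smul_mulVec, dotProduct_smul, smul_eq_mul]
    exact mul_nonneg (by exact_mod_cast hr) (hpsd.dotProduct_mulVec_nonneg x)

lemma psd_sum {N : ℕ} {ι : Type*} (s : Finset ι) (f : ι → Matrix (Fin N) (Fin N) ℂ)
    (hf : ∀ j ∈ s, (f j).PosSemidef) : (∑ j ∈ s, f j).PosSemidef := by
  classical
  induction s using Finset.induction with
  | empty => simpa using Matrix.PosSemidef.zero
  | insert _ _ hj ih =>
    rw [Finset.sum_insert hj]
    exact (hf _ (Finset.mem_insert_self _ _)).add
      (ih fun j hjs => hf j (Finset.mem_insert_of_mem hjs))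

/-- If the KKT stationarity equation with multiplier `λ_{ip} = 0`
holds at `(p, i)`, then (the coefficient matrix being Hermitian positive definite)
`w_{ip} = 0`, and hence the SINR constraint of the relaxed problem is violated for
all nonnegative interference bounds `τ, ε`; so at any feasible KKT point the
multiplier of each SINR constraint must be strictly positive. -/
theorem stmt3
    {T U : Type*} [Fintype T] [Fintype U] [DecidableEq T] [DecidableEq U]
    (Up : T → Finset U)
    (hserve : ∀ i : U, ∃ p : T, i ∈ Up p)
    (N : ℕ) (hN : 1 ≤ N)
    (h : U → T → (Fin N → ℂ))
    (γ : U → T → ℝ) (σ2 : ℝ)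
    (Ti : U → Finset T) (hTi : ∀ i p, p ∈ Ti i ↔ i ∈ Up p)
    (p : T) (i : U) (hi : i ∈ Up p)
    (hγip : 0 < γ i p) (hσ : 0 < σ2)
    (α : U → ℝ) (hα : ∀ j ∈ (Up p).erase i, 0 ≤ α j)
    (β : U → ℝ) (hβ : ∀ j ∉ Up p, 0 ≤ β j)
    (lam : U → ℝ) (hlam : ∀ j ∈ (Up p).erase i, 0 ≤ lam j)
    (w : T → U → (Fin N → ℂ))
    -- the KKT coefficient matrix
    (K : Matrix (Fin N) (Fin N) ℂ)
    (hK : K = (1 : Matrix (Fin N) (Fin N) ℂ)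
        + ∑ j ∈ (Up p).erase i, ((α j : ℝ) : ℂ) • vecMulVec (h j p) (star (h j p))
        + ∑ j ∈ (Up p)ᶜ, ((β j : ℝ) : ℂ) • vecMulVec (h j p) (star (h j p))
        + ∑ j ∈ (Up p).erase i, ((lam j / N : ℝ) : ℂ) • vecMulVec (h j p) (star (h j p)))
    -- the KKT stationarity equation
    (hstat : K *ᵥ w p i = 0) :
    K.PosDef ∧ w p i = 0 ∧
    ∀ τ ε : T → ℝ, (∀ q, 0 ≤ τ q) → (∀ q, 0 ≤ ε q) →
      ¬ (γ i p * (∑ j ∈ (Up p).erase i, ‖star (h i p) ⬝ᵥ w p j‖ ^ 2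
            + ∑ q ∈ (Ti i).erase p, τ q
            + ∑ q ∈ (Ti i)ᶜ, ε q + σ2)
          ≤ ‖star (h i p) ⬝ᵥ w p i‖ ^ 2) := by
  
  have hKpd : K.PosDef := by
    rw [hK]
    have h1 : (1 : Matrix (Fin N) (Fin N) ℂ).PosDef := Matrix.PosDef.one
    exact ((h1.add_posSemidef (psd_sum _ _ fun j hj =>
        psd_smul_vecMulVec _ _ (hα j hj))).add_posSemidef
      (psd_sum _ _ fun j hj =>
        psd_smul_vecMulVec _ _ (hβ j (Finset.mem_compl.mp hj)))).add_posSemidef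
      (psd_sum _ _ fun j hj =>
        psd_smul_vecMulVec _ _ (div_nonneg (hlam j hj) (Nat.cast_nonneg N)))
  have hw : w p i = 0 := by
    by_contra h0
    have := hKpd.dotProduct_mulVec_pos h0
    rw [hstat, dotProduct_zero] at this
    exact lt_irrefl _ this
  refine ⟨hKpd, hw, ?_⟩
  intro τ ε hτ hε hle
  rw [hw] at hle
  simp only [dotProduct_zero, norm_zero] at hle
  have hS : 0 < ∑ j ∈ (Up p).erase i, ‖star (h i p) ⬝ᵥ w p j‖ ^ 2
      + ∑ q ∈ (Ti i).erase p, τ q + ∑ q ∈ (Ti i)ᶜ, ε q + σ2 := by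
    have h2 : 0 ≤ ∑ j ∈ (Up p).erase i, ‖star (h i p) ⬝ᵥ w p j‖ ^ 2 :=
      Finset.sum_nonneg fun j _ => by positivity
    have h3 : 0 ≤ ∑ q ∈ (Ti i).erase p, τ q := Finset.sum_nonneg fun q _ => hτ q
    have h4 : 0 ≤ ∑ q ∈ (Ti i)ᶜ, ε q := Finset.sum_nonneg fun q _ => hε q
    linarith
  have : (0:ℝ) < γ i p * _ := mul_pos hγip hS
  simp only [ne_eq, OfNat.ofNat_ne_zero, not_false_eq_true, zero_pow] at hle
  linarith
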